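/- Let k, m, ℓ be natural numbers with ℓ ≥ 1, and let H ⊆ [k]^m be a nonempty finite class with ℓ-exponential dimension d_E. Then there exists an ℓ-list orientation σ of the one-inclusion graph G(H) whose maximum ℓ-outdegree is at most d_E. -/

import Mathlib

/-- The edge of the one-inclusion graph of `H` in direction `i` through the vertex `g`:
all `h ∈ H` agreeing with `g` outside coordinate `i`. -/
def edgeOf {m k : ℕ} (H : Finset (Fin m → Fin k)) (i : Fin m) (g : Fin m → Fin k) :
    Finset (Fin m → Fin k) :=
  H.filter fun h => ∀ j, j ≠ i → h j = g j

/-- The edges of the one-inclusion graph of `H`, each recorded together with its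
direction: for every direction `i` and every vertex `g ∈ H` we get the (nonempty) edge
`e_{i,f}` where `f` is the restriction of `g` to `[m] \ {i}`. -/
def oigEdges {m k : ℕ} (H : Finset (Fin m → Fin k)) :
    Finset (Fin m × Finset (Fin m → Fin k)) :=
  (Finset.univ ×ˢ H).image fun p => (p.1, edgeOf H p.1 p.2)

/-- The shifting average `ℓ`-degree of `H`:
`savd^ℓ(H) = (1/|H|) ∑_{e edge of G(H)} max(|e| - ℓ, 0)`. -/
noncomputable def savd {m k : ℕ} (ℓ : ℕ) (H : Finset (Fin m → Fin k)) : ℝ :=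
  (H.card : ℝ)⁻¹ * ∑ e ∈ oigEdges H, ((e.2.card - ℓ : ℕ) : ℝ)

/-- The `ℓ`-exponential dimension of `H ⊆ [k]^m`: the largest `d` such that for some
coordinates `i_1, …, i_d ∈ [m]` the projection of `H` has at least `(ℓ+1)^d` elements. -/
noncomputable def expDim {m k : ℕ} (ℓ : ℕ) (H : Finset (Fin m → Fin k)) : ℕ :=
  sSup {d : ℕ | ∃ t : Fin d → Fin m,
    (ℓ + 1) ^ d ≤ (H.image fun h => fun j => h (t j)).card}

open Finset

lemma mem_edgeOf {m k : ℕ} {H : Finset (Fin m → Fin k)} {i g h} :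
    h ∈ edgeOf H i g ↔ h ∈ H ∧ ∀ j, j ≠ i → h j = g j := by
  simp [edgeOf]

lemma self_mem_edgeOf {m k : ℕ} {H : Finset (Fin m → Fin k)} {i g} (hg : g ∈ H) :
    g ∈ edgeOf H i g := mem_edgeOf.2 ⟨hg, fun _ _ => rfl⟩

lemma edgeOf_subset {m k : ℕ} {H : Finset (Fin m → Fin k)} {i g} : edgeOf H i g ⊆ H :=
  filter_subset _ _

lemma edgeOf_eq_of_mem {m k : ℕ} {H : Finset (Fin m → Fin k)} {i g v}
    (hv : v ∈ edgeOf H i g) : edgeOf H i v = edgeOf H i g := by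
  obtain ⟨-, hag⟩ := mem_edgeOf.1 hv
  ext h
  simp only [mem_edgeOf]
  constructor
  · rintro ⟨hh, ha⟩; exact ⟨hh, fun j hj => (ha j hj).trans (hag j hj)⟩
  · rintro ⟨hh, ha⟩; exact ⟨hh, fun j hj => (ha j hj).trans (hag j hj).symm⟩

lemma bddAbove_expDimSet {m k ℓ : ℕ} (hℓ : 1 ≤ ℓ) (H : Finset (Fin m → Fin k)) :
    BddAbove {d : ℕ | ∃ t : Fin d → Fin m,
      (ℓ + 1) ^ d ≤ (H.image fun h => fun j => h (t j)).card} := by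
  refine ⟨H.card, fun d hd => ?_⟩
  obtain ⟨t, ht⟩ := hd
  have h1 : (ℓ + 1) ^ d ≤ H.card := ht.trans (card_image_le)
  have h2 : d < (ℓ + 1) ^ d := (Nat.lt_pow_self (Nat.lt_succ_of_le hℓ) : d < (ℓ + 1) ^ d)
  exact le_of_lt (lt_of_lt_of_le h2 h1)

lemma le_expDim {m k ℓ : ℕ} (hℓ : 1 ≤ ℓ) {H : Finset (Fin m → Fin k)} {d : ℕ}
    (h : ∃ t : Fin d → Fin m, (ℓ + 1) ^ d ≤ (H.image fun h => fun j => h (t j)).card) :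
    d ≤ expDim ℓ H :=
  le_csSup (bddAbove_expDimSet hℓ H) h

lemma expDim_le_expDim {m₁ m₂ k₁ k₂ ℓ : ℕ} (hℓ : 1 ≤ ℓ) {H₁ : Finset (Fin m₁ → Fin k₁)}
    {H₂ : Finset (Fin m₂ → Fin k₂)}
    (h : ∀ d : ℕ, (∃ t : Fin d → Fin m₁,
        (ℓ + 1) ^ d ≤ (H₁.image fun h => fun j => h (t j)).card) →
      (∃ t : Fin d → Fin m₂, (ℓ + 1) ^ d ≤ (H₂.image fun h => fun j => h (t j)).card)) :
    expDim ℓ H₁ ≤ expDim ℓ H₂ := by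
  unfold expDim
  by_cases hne : {d : ℕ | ∃ t : Fin d → Fin m₁,
      (ℓ + 1) ^ d ≤ (H₁.image fun h => fun j => h (t j)).card}.Nonempty
  · have hmem := Nat.sSup_mem hne (bddAbove_expDimSet hℓ H₁)
    exact le_csSup (bddAbove_expDimSet hℓ H₂) (h _ hmem)
  · rw [Set.not_nonempty_iff_eq_empty.1 hne]
    simp

lemma expDim_mono {m k ℓ : ℕ} (hℓ : 1 ≤ ℓ) {W H : Finset (Fin m → Fin k)} (hWH : W ⊆ H) :
    expDim ℓ W ≤ expDim ℓ H := by
  have key : ∀ d : ℕ, (∃ t : Fin d → Fin m,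
      (ℓ + 1) ^ d ≤ (W.image fun h => fun j => h (t j)).card) →
      (∃ t : Fin d → Fin m, (ℓ + 1) ^ d ≤ (H.image fun h => fun j => h (t j)).card) := by
    intro d hd
    obtain ⟨t, ht⟩ := hd
    have hsub : (W.image fun h => fun j => h (t j)) ⊆ (H.image fun h => fun j => h (t j)) :=
      image_subset_image hWH
    exact ⟨t, ht.trans (card_le_card hsub)⟩
  exact expDim_le_expDim hℓ key

lemma expDim_mem {m k ℓ : ℕ} (hℓ : 1 ≤ ℓ) {H : Finset (Fin m → Fin k)} (hne : H.Nonempty) :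
    ∃ t : Fin (expDim ℓ H) → Fin m,
      (ℓ + 1) ^ (expDim ℓ H) ≤ (H.image fun h => fun j => h (t j)).card := by
  have h0 : (0 : ℕ) ∈ {d : ℕ | ∃ t : Fin d → Fin m,
      (ℓ + 1) ^ d ≤ (H.image fun h => fun j => h (t j)).card} := by
    refine ⟨Fin.elim0, ?_⟩
    simpa using card_pos.2 (hne.image (fun h => fun j : Fin 0 => h (Fin.elim0 j)))
  exact Nat.sSup_mem ⟨0, h0⟩ (bddAbove_expDimSet hℓ H)

lemma oigEdges_eq_biUnion {m k : ℕ} (H : Finset (Fin m → Fin k)) :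
    oigEdges H = Finset.univ.biUnion
      (fun i : Fin m => (H.image (edgeOf H i)).image (fun e => (i, e))) := by
  ext ⟨i, e⟩
  simp only [oigEdges, mem_image, mem_product, mem_biUnion, mem_univ, true_and, Prod.exists,
    Prod.mk.injEq]
  constructor
  · rintro ⟨a, b, hb, rfl, rfl⟩
    exact ⟨a, _, ⟨b, hb, rfl⟩, rfl, rfl⟩
  · rintro ⟨a, e', ⟨b, hb, rfl⟩, rfl, rfl⟩
    exact ⟨a, b, hb, rfl, rfl⟩

lemma sum_oigEdges {m k : ℕ} (H : Finset (Fin m → Fin k))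
    (F : Finset (Fin m → Fin k) → ℕ) :
    ∑ e ∈ oigEdges H, F e.2 = ∑ i : Fin m, ∑ eb ∈ H.image (edgeOf H i), F eb := by
  rw [oigEdges_eq_biUnion, sum_biUnion]
  · refine Finset.sum_congr rfl fun i _ => ?_
    rw [Finset.sum_image]
    intro x _ y _ hxy
    exact (Prod.mk.injEq _ _ _ _ ▸ hxy).2
  · intro i _ j _ hij
    simp only [Finset.disjoint_left, mem_image, Prod.ext_iff]
    rintro p hp hq
    obtain ⟨x, -, hxi, -⟩ := hp
    obtain ⟨y, -, hyj, -⟩ := hq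
    exact hij (hxi.symm ▸ hyj.symm ▸ rfl)

/-- Restriction of edges to a subclass: summing the `ℓ`-excess of the traces `eb ∩ W`
of the edges of `G(V)` on `W ⊆ V` is at most the `ℓ`-excess sum over edges of `G(W)`. -/
lemma sum_edge_restrict {m k ℓ : ℕ} {W V : Finset (Fin m → Fin k)} (hWV : W ⊆ V) (i : Fin m) :
    ∑ eb ∈ V.image (edgeOf V i), ((eb.filter (· ∈ W)).card - ℓ)
      ≤ ∑ ec ∈ W.image (edgeOf W i), (ec.card - ℓ) := by
  classical
  set A := V.image (edgeOf V i) with hA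
  set A' := A.filter (fun eb => (eb.filter (· ∈ W)).Nonempty) with hA'
  have key : ∀ eb ∈ A', ∀ g ∈ eb.filter (· ∈ W), eb.filter (· ∈ W) = edgeOf W i g ∧ eb = edgeOf V i g := by
    intro eb heb g hg
    obtain ⟨hebA, -⟩ := mem_filter.1 heb
    obtain ⟨v, -, rfl⟩ := mem_image.1 hebA
    obtain ⟨hgeb, hgW⟩ := mem_filter.1 hg
    have h1 : edgeOf V i g = edgeOf V i v := edgeOf_eq_of_mem hgeb
    refine ⟨?_, h1.symm⟩
    ext w
    simp only [mem_filter, mem_edgeOf, ← h1]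
    constructor
    · rintro ⟨⟨-, ha⟩, hw⟩; exact ⟨hw, ha⟩
    · rintro ⟨hw, ha⟩; exact ⟨⟨hWV hw, ha⟩, hw⟩
  have step1 : ∑ eb ∈ A, ((eb.filter (· ∈ W)).card - ℓ)
      = ∑ eb ∈ A', ((eb.filter (· ∈ W)).card - ℓ) := by
    refine (Finset.sum_subset (filter_subset _ _) ?_).symm
    intro eb heb heb'
    have : eb.filter (· ∈ W) = ∅ := by
      simp only [hA', mem_filter, heb, true_and] at heb'
      exact not_nonempty_iff_eq_empty.1 heb'
    rw [this]
    simp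
  have step2 : ∑ eb ∈ A', ((eb.filter (· ∈ W)).card - ℓ)
      = ∑ ec ∈ A'.image (fun eb => eb.filter (· ∈ W)), (ec.card - ℓ) := by
    rw [Finset.sum_image]
    intro x hx y hy hxy
    obtain ⟨-, hxne⟩ := mem_filter.1 hx
    obtain ⟨g, hg⟩ := hxne
    have hx2 := (key x hx g hg).2
    have hg' : g ∈ y.filter (· ∈ W) := by
      have hxy' : x.filter (· ∈ W) = y.filter (· ∈ W) := hxy
      exact hxy' ▸ hg
    have hy2 := (key y hy g hg').2
    rw [hx2, hy2]
  have step3 : A'.image (fun eb => eb.filter (· ∈ W)) ⊆ W.image (edgeOf W i) := by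
    intro ec hec
    obtain ⟨eb, heb, rfl⟩ := mem_image.1 hec
    obtain ⟨-, hne⟩ := mem_filter.1 heb
    obtain ⟨g, hg⟩ := hne
    rw [(key eb heb g hg).1]
    exact mem_image_of_mem _ (mem_filter.1 hg).2
  rw [step1, step2]
  exact Finset.sum_le_sum_of_subset step3

lemma exists_top_subset {α : Type*} [DecidableEq α] (s : Finset α) (w : α → ℕ) :
    ∀ n ≤ s.card, ∃ P ⊆ s, P.card = n ∧ ∀ g ∈ P, ∀ g' ∈ s, g' ∉ P → w g' ≤ w g := by
  intro n
  induction n with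
  | zero => exact fun _ => ⟨∅, empty_subset _, card_empty, by simp⟩
  | succ n ih =>
    intro hn
    obtain ⟨P, hPs, hPcard, hPtop⟩ := ih (le_of_lt (Nat.lt_of_lt_of_le (Nat.lt_succ_self n) hn))
    have hne : (s \ P).Nonempty := by
      rw [← card_pos, card_sdiff_of_subset hPs]
      omega
    obtain ⟨g₀, hg₀, hg₀max⟩ := Finset.exists_max_image (s \ P) w hne
    obtain ⟨hg₀s, hg₀P⟩ := mem_sdiff.1 hg₀
    refine ⟨insert g₀ P, insert_subset hg₀s hPs, ?_, ?_⟩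
    · rw [card_insert_of_notMem hg₀P, hPcard]
    · intro g hg g' hg's hg'P
      have hg'P' : g' ∉ P := fun h => hg'P (mem_insert_of_mem h)
      rcases mem_insert.1 hg with rfl | hgP
      · exact hg₀max g' (mem_sdiff.2 ⟨hg's, hg'P'⟩)
      · exact hPtop g hgP g' hg's hg'P'

/-- Integral feasibility for the orientation flow problem, proven by induction on the
total demand, using submodularity / uncrossing of tight sets. -/
lemma flow_lemma {α V : Type*} [DecidableEq α] [DecidableEq V] [Fintype V] :
    ∀ (N : ℕ) (ι : Finset α) (E : α → Finset V) (q : α → ℕ) (c : V → ℕ),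
    (∑ a ∈ ι, q a) = N →
    (∀ W : Finset V, ∑ a ∈ ι, (q a - (E a \ W).card) ≤ ∑ v ∈ W, c v) →
    ∃ X : α → Finset V, (∀ a ∈ ι, X a ⊆ E a ∧ (X a).card = q a) ∧
      ∀ v : V, ((ι.filter (fun a => v ∈ X a)).card ≤ c v) := by
  intro N
  induction N using Nat.strong_induction_on with
  | _ N IH =>
  intro ι E q c hsum hyp
  by_cases hz : ∀ a ∈ ι, q a = 0
  · exact ⟨fun _ => ∅, fun a ha => ⟨empty_subset _, by simp [hz a ha]⟩, fun v => by simp⟩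
  · push_neg at hz
    obtain ⟨a₀, ha₀ι, ha₀⟩ := hz
    have hq₀ : 1 ≤ q a₀ := Nat.one_le_iff_ne_zero.2 ha₀
    set g : α → Finset V → ℕ := fun a W => q a - (E a \ W).card with hg
    have hypg : ∀ W : Finset V, ∑ a ∈ ι, g a W ≤ ∑ v ∈ W, c v := hyp
    have hqE : ∀ a ∈ ι, q a ≤ (E a).card := by
      intro a ha
      have h0 := hypg ∅
      simp only [sum_empty] at h0
      have h3 : g a ∅ ≤ ∑ a ∈ ι, g a ∅ :=
        Finset.single_le_sum (f := fun a => g a ∅) (fun _ _ => Nat.zero_le _) ha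
      have h2 : g a ∅ = 0 := by omega
      simp only [hg, sdiff_empty] at h2
      omega
    have hsuper : ∀ (a : α) (W₁ W₂ : Finset V),
        g a W₁ + g a W₂ ≤ g a (W₁ ∪ W₂) + g a (W₁ ∩ W₂) := by
      intro a W₁ W₂
      have e1 : E a \ (W₁ ∪ W₂) = (E a \ W₁) ∩ (E a \ W₂) := sdiff_union_distrib _ _ _
      have e2 : E a \ (W₁ ∩ W₂) = (E a \ W₁) ∪ (E a \ W₂) := sdiff_inf
      have e3 : ((E a \ W₁) ∩ (E a \ W₂)).card + ((E a \ W₁) ∪ (E a \ W₂)).card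
          = (E a \ W₁).card + (E a \ W₂).card := card_inter_add_card_union _ _
      have e4 : ((E a \ W₁) ∩ (E a \ W₂)).card ≤ (E a \ W₁).card :=
        card_le_card inter_subset_left
      have e5 : ((E a \ W₁) ∩ (E a \ W₂)).card ≤ (E a \ W₂).card :=
        card_le_card inter_subset_right
      simp only [hg, e1, e2]
      omega
    clear_value g
    have huni : ∀ W₁ W₂ : Finset V,
        ((∑ a ∈ ι, g a W₁ = ∑ v ∈ W₁, c v) ∧ g a₀ W₁ = 0) →
        ((∑ a ∈ ι, g a W₂ = ∑ v ∈ W₂, c v) ∧ g a₀ W₂ = 0) →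
        ((∑ a ∈ ι, g a (W₁ ∪ W₂) = ∑ v ∈ W₁ ∪ W₂, c v) ∧ g a₀ (W₁ ∪ W₂) = 0) := by
      rintro W₁ W₂ ⟨ht₁, hz₁⟩ ⟨ht₂, hz₂⟩
      have hsum2 : ∑ a ∈ ι, g a W₁ + ∑ a ∈ ι, g a W₂
          ≤ ∑ a ∈ ι, g a (W₁ ∪ W₂) + ∑ a ∈ ι, g a (W₁ ∩ W₂) := by
        rw [← Finset.sum_add_distrib, ← Finset.sum_add_distrib]
        exact Finset.sum_le_sum fun a _ => hsuper a W₁ W₂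
      have hc : ∑ v ∈ W₁ ∪ W₂, c v + ∑ v ∈ W₁ ∩ W₂, c v = ∑ v ∈ W₁, c v + ∑ v ∈ W₂, c v :=
        Finset.sum_union_inter
      have hu := hypg (W₁ ∪ W₂)
      have hi := hypg (W₁ ∩ W₂)
      have htu : ∑ a ∈ ι, g a (W₁ ∪ W₂) = ∑ v ∈ W₁ ∪ W₂, c v := by omega
      refine ⟨htu, ?_⟩
      have htot : ∑ a ∈ ι, (g a W₁ + g a W₂) = ∑ a ∈ ι, (g a (W₁ ∪ W₂) + g a (W₁ ∩ W₂)) := by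
        rw [Finset.sum_add_distrib, Finset.sum_add_distrib]
        omega
      have hterm := (Finset.sum_eq_sum_iff_of_le (fun a _ => hsuper a W₁ W₂)).1 htot a₀ ha₀ι
      omega
    have hgood : ∃ v₀ ∈ E a₀, 1 ≤ c v₀ ∧
        ∀ W : Finset V, v₀ ∈ W → (∑ a ∈ ι, g a W = ∑ v ∈ W, c v) → 1 ≤ g a₀ W := by
      by_contra hbad
      push_neg at hbad
      have hWv : ∀ v ∈ E a₀, ∃ W : Finset V, v ∈ W ∧
          (∑ a ∈ ι, g a W = ∑ v ∈ W, c v) ∧ g a₀ W = 0 := by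
        intro v hv
        rcases Nat.lt_or_ge (c v) 1 with hcv | hcv
        · have h1 := hypg {v}
          have h2 : ∑ x ∈ ({v} : Finset V), c x = 0 := by
            simp only [sum_singleton]; omega
          have h3 : g a₀ {v} ≤ ∑ a ∈ ι, g a {v} :=
            Finset.single_le_sum (f := fun a => g a {v}) (fun _ _ => Nat.zero_le _) ha₀ι
          exact ⟨{v}, mem_singleton_self v, by omega, by omega⟩
        · obtain ⟨W, hvW, htight, hza⟩ := hbad v hv hcv
          exact ⟨W, hvW, htight, by omega⟩
      have hunion : ∀ S : Finset V, S ⊆ E a₀ → ∃ W : Finset V, S ⊆ W ∧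
          (∑ a ∈ ι, g a W = ∑ v ∈ W, c v) ∧ g a₀ W = 0 := by
        intro S
        induction S using Finset.induction_on with
        | empty =>
          intro _
          refine ⟨∅, Finset.Subset.refl _, ?_, ?_⟩
          · have h1 := hypg ∅
            simp only [sum_empty] at h1 ⊢
            omega
          · have h1 := hypg ∅
            simp only [sum_empty] at h1
            have h3 : g a₀ ∅ ≤ ∑ a ∈ ι, g a ∅ :=
              Finset.single_le_sum (f := fun a => g a ∅) (fun _ _ => Nat.zero_le _) ha₀ι
            omega
        | @insert v S hvS ih =>
          intro hsub
          obtain ⟨W₁, h1, h2, h3⟩ := ih (fun x hx => hsub (mem_insert_of_mem hx))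
          obtain ⟨W₂, k1, k2, k3⟩ := hWv v (hsub (mem_insert_self v S))
          obtain ⟨u1, u2⟩ := huni W₁ W₂ ⟨h2, h3⟩ ⟨k2, k3⟩
          refine ⟨W₁ ∪ W₂, ?_, u1, u2⟩
          intro x hx
          rcases mem_insert.1 hx with rfl | hxS
          · exact mem_union_right _ k1
          · exact mem_union_left _ (h1 hxS)
      obtain ⟨W', hEW, htight, hza⟩ := hunion (E a₀) (Finset.Subset.refl _)
      have hempty : E a₀ \ W' = ∅ := sdiff_eq_empty_iff_subset.2 hEW
      have : g a₀ W' = q a₀ := by rw [hg]; simp [hempty]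
      omega
    obtain ⟨v₀, hv₀E, hv₀c, hv₀good⟩ := hgood
    set E' := Function.update E a₀ (E a₀ \ {v₀}) with hE'
    set q' := Function.update q a₀ (q a₀ - 1) with hq'
    set c' := Function.update c v₀ (c v₀ - 1) with hc'
    have hE'a₀ : E' a₀ = E a₀ \ {v₀} := by simp [hE']
    have hq'a₀ : q' a₀ = q a₀ - 1 := by simp [hq']
    have hc'v₀ : c' v₀ = c v₀ - 1 := by simp [hc']
    have hE'ne : ∀ a, a ≠ a₀ → E' a = E a := fun a ha => Function.update_of_ne ha _ _
    have hq'ne : ∀ a, a ≠ a₀ → q' a = q a := fun a ha => Function.update_of_ne ha _ _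
    have hc'ne : ∀ v, v ≠ v₀ → c' v = c v := fun v hv => Function.update_of_ne hv _ _
    have hsum' : ∑ a ∈ ι, q' a = N - 1 := by
      have h1 : ∑ a ∈ ι.erase a₀, q' a + q' a₀ = ∑ a ∈ ι, q' a := Finset.sum_erase_add _ _ ha₀ι
      have h2 : ∑ a ∈ ι.erase a₀, q a + q a₀ = ∑ a ∈ ι, q a := Finset.sum_erase_add _ _ ha₀ι
      have h3 : ∑ a ∈ ι.erase a₀, q' a = ∑ a ∈ ι.erase a₀, q a :=
        Finset.sum_congr rfl fun a ha => hq'ne a (ne_of_mem_erase ha)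
      omega
    have hyp' : ∀ W : Finset V, ∑ a ∈ ι, (q' a - (E' a \ W).card) ≤ ∑ v ∈ W, c' v := by
      intro W
      have h1 : ∑ a ∈ ι.erase a₀, (q' a - (E' a \ W).card) + (q' a₀ - (E' a₀ \ W).card)
          = ∑ a ∈ ι, (q' a - (E' a \ W).card) := Finset.sum_erase_add _ _ ha₀ι
      have h2 : ∑ a ∈ ι.erase a₀, g a W + g a₀ W = ∑ a ∈ ι, g a W :=
        Finset.sum_erase_add _ _ ha₀ι
      have h3 : ∑ a ∈ ι.erase a₀, (q' a - (E' a \ W).card) = ∑ a ∈ ι.erase a₀, g a W := by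
        refine Finset.sum_congr rfl fun a ha => ?_
        rw [hq'ne a (ne_of_mem_erase ha), hE'ne a (ne_of_mem_erase ha), hg]
      have hmain := hypg W
      by_cases hvW : v₀ ∈ W
      · have hEW : E' a₀ \ W = E a₀ \ W := by
          rw [hE'a₀]
          ext x
          simp only [mem_sdiff, mem_singleton]
          constructor
          · rintro ⟨⟨x1, -⟩, x3⟩; exact ⟨x1, x3⟩
          · rintro ⟨x1, x3⟩; exact ⟨⟨x1, fun h => x3 (h ▸ hvW)⟩, x3⟩
        have hcW : ∑ v ∈ W, c' v + 1 = ∑ v ∈ W, c v := by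
          have k1 : ∑ v ∈ W.erase v₀, c' v + c' v₀ = ∑ v ∈ W, c' v :=
            Finset.sum_erase_add _ _ hvW
          have k2 : ∑ v ∈ W.erase v₀, c v + c v₀ = ∑ v ∈ W, c v :=
            Finset.sum_erase_add _ _ hvW
          have k3 : ∑ v ∈ W.erase v₀, c' v = ∑ v ∈ W.erase v₀, c v :=
            Finset.sum_congr rfl fun v hv => hc'ne v (ne_of_mem_erase hv)
          omega
        rcases Nat.lt_or_ge (∑ a ∈ ι, g a W) (∑ v ∈ W, c v) with hlt | hge
        · have hle : q' a₀ - (E' a₀ \ W).card ≤ g a₀ W := by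
            rw [hq'a₀, hEW, hg]
            simp only
            omega
          omega
        · have htight : ∑ a ∈ ι, g a W = ∑ v ∈ W, c v := le_antisymm hmain hge
          have hpos := hv₀good W hvW htight
          have heq : q' a₀ - (E' a₀ \ W).card + 1 = g a₀ W := by
            rw [hq'a₀, hEW, hg] at *
            simp only at hpos ⊢
            omega
          omega
      · have hvEW : v₀ ∈ E a₀ \ W := mem_sdiff.2 ⟨hv₀E, hvW⟩
        have hEW : (E' a₀ \ W).card + 1 = (E a₀ \ W).card := by
          have e1 : E' a₀ \ W = (E a₀ \ W).erase v₀ := by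
            rw [hE'a₀]
            ext x
            simp only [mem_sdiff, mem_erase, mem_singleton]
            tauto
          rw [e1, card_erase_of_mem hvEW]
          have := card_pos.2 ⟨v₀, hvEW⟩
          omega
        have heq : q' a₀ - (E' a₀ \ W).card = g a₀ W := by
          rw [hq'a₀, hg]
          simp only
          omega
        have hcW : ∑ v ∈ W, c' v = ∑ v ∈ W, c v :=
          Finset.sum_congr rfl fun v hv => hc'ne v (fun h => hvW (h ▸ hv))
        omega
    have hNpos : 1 ≤ N := by
      have : q a₀ ≤ ∑ a ∈ ι, q a := Finset.single_le_sum (fun _ _ => Nat.zero_le _) ha₀ι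
      omega
    obtain ⟨X', hX'1, hX'2⟩ := IH (N - 1) (by omega) ι E' q' c' hsum' hyp'
    have hXa₀ : X' a₀ ⊆ E a₀ \ {v₀} := by
      rcases hX'1 a₀ ha₀ι with ⟨hs, -⟩
      rwa [hE'a₀] at hs
    have hv₀X : v₀ ∉ X' a₀ := fun h => by simpa using (hXa₀ h)
    refine ⟨Function.update X' a₀ (insert v₀ (X' a₀)), ?_, ?_⟩
    · intro a ha
      by_cases haa : a = a₀
      · subst haa
        rcases hX'1 a ha with ⟨-, hcard⟩
        rw [hq'a₀] at hcard
        constructor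
        · rw [Function.update_self]
          exact insert_subset hv₀E (hXa₀.trans sdiff_subset)
        · rw [Function.update_self, card_insert_of_notMem hv₀X, hcard]
          omega
      · rw [Function.update_of_ne haa]
        rcases hX'1 a ha with ⟨hs, hcard⟩
        rw [hE'ne a haa] at hs
        rw [hq'ne a haa] at hcard
        exact ⟨hs, hcard⟩
    · intro v
      by_cases hvv : v = v₀
      · subst hvv
        have hsub : ι.filter (fun a => v ∈ Function.update X' a₀ (insert v (X' a₀)) a)
            ⊆ insert a₀ (ι.filter (fun a => v ∈ X' a)) := by
          intro a ha
          obtain ⟨haι, hmem⟩ := mem_filter.1 ha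
          by_cases haa : a = a₀
          · exact haa ▸ mem_insert_self _ _
          · rw [Function.update_of_ne haa] at hmem
            exact mem_insert_of_mem (mem_filter.2 ⟨haι, hmem⟩)
        have k1 := card_le_card hsub
        have k2 := hX'2 v
        have k3 := card_insert_le a₀ (ι.filter (fun a => v ∈ X' a))
        rw [hc'v₀] at k2
        omega
      · have heqf : ι.filter (fun a => v ∈ Function.update X' a₀ (insert v₀ (X' a₀)) a)
            = ι.filter (fun a => v ∈ X' a) := by
          refine Finset.filter_congr fun a ha => ?_
          by_cases haa : a = a₀
          · subst haa
            rw [Function.update_self]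
            simp [mem_insert, hvv]
          · rw [Function.update_of_ne haa]
        rw [heqf]
        have k2 := hX'2 v
        rw [hc'ne v hvv] at k2
        exact k2

/-- The key counting inequality (a discrete Karamata-type inequality): the sum of
`ℓ`-excesses of the slice sizes is at most the sum of `ℓ`-excesses of the sorted layer
sizes. -/
lemma slice_ineq {γ β : Type*} [DecidableEq γ] [DecidableEq β] [Fintype β]
    (eb : Finset γ) (F : γ → Finset β) (ℓ K : ℕ) (hK : ∀ g ∈ eb, (F g).card ≤ K) :
    ∑ y : β, ((eb.filter (fun g => y ∈ F g)).card - ℓ)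
      ≤ ∑ t ∈ Finset.Icc 1 K, ((eb.filter (fun g => t ≤ (F g).card)).card - ℓ) := by
  classical
  set a : β → ℕ := fun y => (eb.filter (fun g => y ∈ F g)).card with ha
  set c : ℕ → ℕ := fun t => (eb.filter (fun g => t ≤ (F g).card)).card with hc
  have swap_a : ∀ Q : Finset γ, Q ⊆ eb →
      ∑ y : β, (Q.filter (fun g => y ∈ F g)).card = ∑ g ∈ Q, (F g).card := by
    intro Q hQ
    simp only [card_filter]
    rw [Finset.sum_comm]
    refine Finset.sum_congr rfl fun g _ => ?_
    rw [← card_filter]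
    rw [Finset.filter_univ_mem]
  have swap_c : ∀ Q : Finset γ, Q ⊆ eb →
      ∑ t ∈ Finset.Icc 1 K, (Q.filter (fun g => t ≤ (F g).card)).card
        = ∑ g ∈ Q, (F g).card := by
    intro Q hQ
    simp only [card_filter]
    rw [Finset.sum_comm]
    refine Finset.sum_congr rfl fun g hg => ?_
    rw [← card_filter]
    have : (Finset.Icc 1 K).filter (fun t => t ≤ (F g).card) = Finset.Icc 1 ((F g).card) := by
      ext t
      simp only [mem_filter, mem_Icc]
      have := hK g (hQ hg)
      omega
    rw [this, Nat.card_Icc]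
    omega
  show ∑ y : β, (a y - ℓ) ≤ ∑ t ∈ Finset.Icc 1 K, (c t - ℓ)
  have htot_a : ∑ y : β, a y = ∑ g ∈ eb, (F g).card := swap_a eb (Finset.Subset.refl _)
  have htot_c : ∑ t ∈ Finset.Icc 1 K, c t = ∑ g ∈ eb, (F g).card :=
    swap_c eb (Finset.Subset.refl _)
  -- the min-sum inequality via a top-weight subset
  obtain ⟨P, hPsub, hPcard, hPtop⟩ :=
    exists_top_subset eb (fun g => (F g).card) (min ℓ eb.card) (min_le_right _ _)
  have hmin : ∑ t ∈ Finset.Icc 1 K, min (c t) ℓ ≤ ∑ y : β, min (a y) ℓ := by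
    have h1 : ∀ t ∈ Finset.Icc 1 K, min (c t) ℓ ≤ (P.filter (fun g => t ≤ (F g).card)).card := by
      intro t _
      by_cases hall : ∀ g ∈ P, t ≤ (F g).card
      · rw [Finset.filter_true_of_mem hall, hPcard]
        have : c t ≤ eb.card := card_filter_le _ _
        omega
      · push_neg at hall
        obtain ⟨g₀, hg₀P, hg₀⟩ := hall
        have hsub : eb.filter (fun g => t ≤ (F g).card) ⊆ P.filter (fun g => t ≤ (F g).card) := by
          intro g' hg'
          obtain ⟨hg'eb, hg't⟩ := mem_filter.1 hg'
          refine mem_filter.2 ⟨?_, hg't⟩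
          by_contra hg'P
          have := hPtop g₀ hg₀P g' hg'eb hg'P
          omega
        have : c t ≤ (P.filter (fun g => t ≤ (F g).card)).card := card_le_card hsub
        omega
    have h2 : ∑ t ∈ Finset.Icc 1 K, (P.filter (fun g => t ≤ (F g).card)).card
        = ∑ g ∈ P, (F g).card := swap_c P hPsub
    have h3 : ∑ y : β, (P.filter (fun g => y ∈ F g)).card = ∑ g ∈ P, (F g).card :=
      swap_a P hPsub
    have h4 : ∀ y : β, (P.filter (fun g => y ∈ F g)).card ≤ min (a y) ℓ := by
      intro y
      have k1 : (P.filter (fun g => y ∈ F g)).card ≤ a y :=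
        card_le_card (filter_subset_filter _ hPsub)
      have k2 : (P.filter (fun g => y ∈ F g)).card ≤ P.card := card_filter_le _ _
      omega
    calc ∑ t ∈ Finset.Icc 1 K, min (c t) ℓ
        ≤ ∑ t ∈ Finset.Icc 1 K, (P.filter (fun g => t ≤ (F g).card)).card :=
          Finset.sum_le_sum h1
      _ = ∑ g ∈ P, (F g).card := h2
      _ = ∑ y : β, (P.filter (fun g => y ∈ F g)).card := h3.symm
      _ ≤ ∑ y : β, min (a y) ℓ := Finset.sum_le_sum fun y _ => h4 y
  have e1 : ∑ y : β, (a y - ℓ) + ∑ y : β, min (a y) ℓ = ∑ y : β, a y := by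
    rw [← Finset.sum_add_distrib]
    exact Finset.sum_congr rfl fun y _ => by omega
  have e2 : ∑ t ∈ Finset.Icc 1 K, (c t - ℓ) + ∑ t ∈ Finset.Icc 1 K, min (c t) ℓ
      = ∑ t ∈ Finset.Icc 1 K, c t := by
    rw [← Finset.sum_add_distrib]
    exact Finset.sum_congr rfl fun t _ => by omega
  omega

section Dir
variable {m k : ℕ}

/-- Agreement off `castSucc i` is the same as agreement of initial segments off `i`
together with agreement at the last coordinate. -/
lemma agree_iff (i : Fin m) (h' h : Fin (m + 1) → Fin k) :
    (∀ j, j ≠ i.castSucc → h' j = h j) ↔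
      ((∀ j', j' ≠ i → Fin.init h' j' = Fin.init h j') ∧
        h' (Fin.last m) = h (Fin.last m)) := by
  constructor
  · intro hag
    refine ⟨fun j' hj' => hag j'.castSucc (fun hh => hj' (Fin.castSucc_injective m hh)), ?_⟩
    exact hag (Fin.last m) (Fin.castSucc_lt_last i).ne'
  · rintro ⟨hinit, hlast⟩ j hj
    by_cases hjl : j = Fin.last m
    · rw [hjl]; exact hlast
    · obtain ⟨j', rfl⟩ := Fin.exists_castSucc_eq.2 hjl
      have hj'i : j' ≠ i := fun hh => hj (by rw [hh])
      exact hinit j' hj'i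

/-- Description of an edge of `G(H)` in a non-last direction via a slice of an edge of
the projected class. -/
lemma edge_castSucc (H : Finset (Fin (m + 1) → Fin k)) (i : Fin m) {h : Fin (m + 1) → Fin k}
    (hh : h ∈ H) :
    edgeOf H i.castSucc h =
      (((edgeOf (H.image Fin.init) i (Fin.init h)).filter
          (fun g => Fin.snoc g (h (Fin.last m)) ∈ H)).image
        (fun g => Fin.snoc g (h (Fin.last m)))) := by
  ext h'
  constructor
  · intro hmem
    obtain ⟨h'H, hag⟩ := mem_edgeOf.1 hmem
    obtain ⟨hinit, hlast⟩ := (agree_iff i h' h).1 hag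
    refine mem_image.2 ⟨Fin.init h', mem_filter.2 ⟨mem_edgeOf.2 ⟨mem_image_of_mem _ h'H, hinit⟩, ?_⟩, ?_⟩
    · rw [← hlast, Fin.snoc_init_self]; exact h'H
    · rw [← hlast, Fin.snoc_init_self]
  · intro hmem
    obtain ⟨g, hgf, rfl⟩ := mem_image.1 hmem
    obtain ⟨hg, hgH⟩ := mem_filter.1 hgf
    obtain ⟨-, hginit⟩ := mem_edgeOf.1 hg
    refine mem_edgeOf.2 ⟨hgH, (agree_iff i _ h).2 ⟨?_, ?_⟩⟩
    · intro j' hj'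
      rw [Fin.init_snoc]
      exact hginit j' hj'
    · rw [Fin.snoc_last]

/-- The per-direction bound: the `ℓ`-excess sum over edges of `G(H)` in direction
`castSucc i` is at most the sum over edges `ebp` of the projected class of the
`ℓ`-excess sums of their slices. -/
lemma dir_sum_castSucc (H : Finset (Fin (m + 1) → Fin k)) (i : Fin m) (ℓ : ℕ) :
    ∑ eb ∈ H.image (edgeOf H i.castSucc), (eb.card - ℓ)
      ≤ ∑ ebp ∈ (H.image Fin.init).image (edgeOf (H.image Fin.init) i),
          ∑ y : Fin k, ((ebp.filter (fun g => Fin.snoc g y ∈ H)).card - ℓ) := by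
  classical
  set H' := H.image Fin.init with hH'
  set Ψ : Finset (Fin m → Fin k) × Fin k → Finset (Fin (m + 1) → Fin k) :=
    fun p => (p.1.filter (fun g => Fin.snoc g p.2 ∈ H)).image (fun g => Fin.snoc g p.2)
    with hΨ
  set D := ((H'.image (edgeOf H' i)) ×ˢ (univ : Finset (Fin k))).filter
    (fun p => (p.1.filter (fun g => Fin.snoc g p.2 ∈ H)).Nonempty) with hD
  -- the snoc map is injective
  have hsnocinj : ∀ (y : Fin k) (g₁ g₂ : Fin m → Fin k),
      (Fin.snoc g₁ y : Fin (m + 1) → Fin k) = Fin.snoc g₂ y → g₁ = g₂ := by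
    intro y g₁ g₂ hgg
    have := congrArg Fin.init hgg
    rwa [Fin.init_snoc, Fin.init_snoc] at this
  -- the image identity
  have himg : H.image (edgeOf H i.castSucc) = D.image Ψ := by
    ext e
    simp only [mem_image]
    constructor
    · rintro ⟨h, hh, rfl⟩
      refine ⟨(edgeOf H' i (Fin.init h), h (Fin.last m)), ?_, (edge_castSucc H i hh).symm⟩
      rw [hD]
      refine mem_filter.2 ⟨mem_product.2 ⟨mem_image_of_mem _ (mem_image_of_mem _ hh), mem_univ _⟩, ?_⟩
      refine ⟨Fin.init h, mem_filter.2 ⟨self_mem_edgeOf (mem_image_of_mem _ hh), ?_⟩⟩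
      rw [Fin.snoc_init_self]; exact hh
    · rintro ⟨⟨ebp, y⟩, hpD, rfl⟩
      rw [hD] at hpD
      obtain ⟨hprod, hne⟩ := mem_filter.1 hpD
      obtain ⟨hebp, -⟩ := mem_product.1 hprod
      obtain ⟨g₀, hg₀⟩ := hne
      obtain ⟨hg₀e, hg₀H⟩ := mem_filter.1 hg₀
      obtain ⟨f₀, -, rfl⟩ := mem_image.1 hebp
      refine ⟨Fin.snoc g₀ y, hg₀H, ?_⟩
      have h1 := edge_castSucc H i hg₀H
      rw [Fin.snoc_last, Fin.init_snoc] at h1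
      rw [h1, edgeOf_eq_of_mem hg₀e]
  -- injectivity of Ψ on D
  have hinj : Set.InjOn Ψ ↑D := by
    rintro ⟨ebp₁, y₁⟩ hp₁ ⟨ebp₂, y₂⟩ hp₂ hΨeq
    rw [hD] at hp₁ hp₂
    simp only [Finset.coe_filter, Set.mem_setOf_eq] at hp₁ hp₂
    obtain ⟨hprod₁, g₁, hg₁⟩ := hp₁
    obtain ⟨hprod₂, -⟩ := hp₂
    obtain ⟨hg₁e, hg₁H⟩ := mem_filter.1 hg₁
    have hmem : Fin.snoc g₁ y₁ ∈ Ψ (ebp₁, y₁) := by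
      rw [hΨ]
      exact mem_image_of_mem _ hg₁
    rw [hΨeq] at hmem
    rw [hΨ] at hmem
    obtain ⟨g₂, hg₂, heq⟩ := mem_image.1 hmem
    have hy : y₂ = y₁ := by
      have := congrArg (fun f => f (Fin.last m)) heq
      simpa [Fin.snoc_last] using this
    have hgg : g₂ = g₁ := by
      have := congrArg Fin.init heq
      rwa [Fin.init_snoc, Fin.init_snoc] at this
    subst hy; subst hgg
    obtain ⟨heb₁, -⟩ := mem_product.1 hprod₁
    obtain ⟨heb₂, -⟩ := mem_product.1 hprod₂
    obtain ⟨f₁, -, rfl⟩ := mem_image.1 heb₁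
    obtain ⟨f₂, -, rfl⟩ := mem_image.1 heb₂
    obtain ⟨hg₂e, -⟩ := mem_filter.1 hg₂
    have e1 : edgeOf H' i f₁ = edgeOf H' i g₂ := (edgeOf_eq_of_mem hg₁e).symm
    have e2 : edgeOf H' i f₂ = edgeOf H' i g₂ := (edgeOf_eq_of_mem hg₂e).symm
    rw [Prod.mk.injEq]
    exact ⟨e1.trans e2.symm, rfl⟩
  -- cardinality of Ψ p
  have hcard : ∀ p : Finset (Fin m → Fin k) × Fin k,
      (Ψ p).card = (p.1.filter (fun g => Fin.snoc g p.2 ∈ H)).card := by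
    intro p
    rw [hΨ]
    exact card_image_of_injOn (fun g₁ _ g₂ _ h => hsnocinj p.2 g₁ g₂ h)
  calc ∑ eb ∈ H.image (edgeOf H i.castSucc), (eb.card - ℓ)
      = ∑ p ∈ D, ((Ψ p).card - ℓ) := by
        rw [himg, Finset.sum_image (fun x hx y hy hxy => hinj (by simpa using hx) (by simpa using hy) hxy)]
    _ = ∑ p ∈ D, ((p.1.filter (fun g => Fin.snoc g p.2 ∈ H)).card - ℓ) := by
        exact Finset.sum_congr rfl fun p _ => by rw [hcard]
    _ ≤ ∑ p ∈ (H'.image (edgeOf H' i)) ×ˢ (univ : Finset (Fin k)),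
          ((p.1.filter (fun g => Fin.snoc g p.2 ∈ H)).card - ℓ) := by
        refine Finset.sum_le_sum_of_subset ?_
        rw [hD]
        exact filter_subset _ _
    _ = ∑ ebp ∈ H'.image (edgeOf H' i),
          ∑ y : Fin k, ((ebp.filter (fun g => Fin.snoc g y ∈ H)).card - ℓ) := by
        rw [Finset.sum_product]

end Dir
section LastDir
open Finset
variable {m k ℓ : ℕ}

lemma edge_last (H : Finset (Fin (m + 1) → Fin k)) (h : Fin (m + 1) → Fin k) :
    edgeOf H (Fin.last m) h = H.filter (fun h' => Fin.init h' = Fin.init h) := by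
  ext h'
  simp only [mem_edgeOf, mem_filter]
  constructor
  · rintro ⟨hH, hag⟩
    refine ⟨hH, funext fun j' => ?_⟩
    exact hag j'.castSucc (Fin.castSucc_lt_last j').ne
  · rintro ⟨hH, hinit⟩
    refine ⟨hH, fun j hj => ?_⟩
    obtain ⟨j', rfl⟩ := Fin.exists_castSucc_eq.2 hj
    exact congrFun hinit j'

lemma sum_last (H : Finset (Fin (m + 1) → Fin k)) (ℓ : ℕ) :
    ∑ eb ∈ H.image (edgeOf H (Fin.last m)), (eb.card - ℓ)
      = ∑ g ∈ H.image Fin.init, ((H.filter (fun h => Fin.init h = g)).card - ℓ) := by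
  have h1 : H.image (edgeOf H (Fin.last m))
      = (H.image Fin.init).image (fun g => H.filter (fun h => Fin.init h = g)) := by
    rw [Finset.image_image]
    exact Finset.image_congr fun h _ => edge_last H h
  rw [h1, Finset.sum_image]
  intro g₁ hg₁ g₂ _ hff
  obtain ⟨h₁, hh₁, rfl⟩ := mem_image.1 hg₁
  have : h₁ ∈ H.filter (fun h => Fin.init h = Fin.init h₁) := mem_filter.2 ⟨hh₁, rfl⟩
  have hff' : H.filter (fun h => Fin.init h = Fin.init h₁) = H.filter (fun h => Fin.init h = g₂) := hff
  rw [hff'] at this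
  exact (mem_filter.1 this).2

lemma fiber_card (H : Finset (Fin (m + 1) → Fin k)) (g : Fin m → Fin k) :
    (Finset.univ.filter (fun y : Fin k => Fin.snoc g y ∈ H)).card
      = (H.filter (fun h => Fin.init h = g)).card := by
  refine Finset.card_bij' (fun y _ => Fin.snoc g y) (fun h _ => h (Fin.last m)) ?_ ?_ ?_ ?_
  · intro y hy
    refine mem_filter.2 ⟨(mem_filter.1 hy).2, ?_⟩
    rw [Fin.init_snoc]
  · intro h hh
    obtain ⟨hH, hinit⟩ := mem_filter.1 hh
    refine mem_filter.2 ⟨mem_univ _, ?_⟩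
    show Fin.snoc g (h (Fin.last m)) ∈ H
    rw [← hinit, Fin.snoc_init_self]
    exact hH
  · intro y _
    exact Fin.snoc_last _ _
  · intro h hh
    obtain ⟨-, hinit⟩ := mem_filter.1 hh
    show Fin.snoc g (h (Fin.last m)) = h
    rw [← hinit, Fin.snoc_init_self]

lemma fiber_le (H : Finset (Fin (m + 1) → Fin k)) (g : Fin m → Fin k) :
    (H.filter (fun h => Fin.init h = g)).card ≤ k := by
  rw [← fiber_card]
  exact (card_filter_le _ _).trans (by simp)

lemma expDim_init_le (hℓ : 1 ≤ ℓ) (H : Finset (Fin (m + 1) → Fin k)) :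
    expDim ℓ (H.image Fin.init) ≤ expDim ℓ H := by
  refine expDim_le_expDim hℓ fun d hd => ?_
  obtain ⟨t, ht⟩ := hd
  refine ⟨fun j => (t j).castSucc, ?_⟩
  have himg : (H.image fun h => fun j => h ((t j).castSucc))
      = ((H.image Fin.init).image fun f => fun j => f (t j)) := by
    rw [Finset.image_image]
    rfl
  rw [himg]
  exact ht

/-- Key dimension step: the class of projections with big fibers has strictly smaller
`ℓ`-exponential dimension. -/
lemma expDim_big_add_one_le (hℓ : 1 ≤ ℓ) (H : Finset (Fin (m + 1) → Fin k))
    (hne : ((H.image Fin.init).filter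
      (fun g => ℓ + 1 ≤ (H.filter (fun h => Fin.init h = g)).card)).Nonempty) :
    expDim ℓ ((H.image Fin.init).filter
      (fun g => ℓ + 1 ≤ (H.filter (fun h => Fin.init h = g)).card)) + 1 ≤ expDim ℓ H := by
  classical
  set T := (H.image Fin.init).filter
    (fun g => ℓ + 1 ≤ (H.filter (fun h => Fin.init h = g)).card) with hT
  set d := expDim ℓ T with hd
  obtain ⟨t, ht⟩ := expDim_mem hℓ hne
  set t' : Fin (d + 1) → Fin (m + 1) :=
    Fin.snoc (fun j => (t j).castSucc) (Fin.last m) with ht'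
  set B := H.image (fun h => fun j => h (t' j)) with hB
  set A := T.image (fun f => fun j => f (t j)) with hA
  set dp : (Fin (d + 1) → Fin k) → (Fin d → Fin k) := fun b => fun j => b j.castSucc with hdp
  have claim1 : ∀ p ∈ A, ℓ + 1 ≤ (B.filter (fun b => dp b = p)).card := by
    intro p hp
    obtain ⟨f, hfT, rfl⟩ := mem_image.1 hp
    obtain ⟨hfH', hfbig⟩ := mem_filter.1 hfT
    have hmap : ∀ h ∈ H.filter (fun h => Fin.init h = f),
        (fun j => h (t' j)) ∈ B.filter (fun b => dp b = fun j => f (t j)) := by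
      intro h hh
      obtain ⟨hhH, hhinit⟩ := mem_filter.1 hh
      refine mem_filter.2 ⟨mem_image_of_mem _ hhH, ?_⟩
      funext j
      show h (t' j.castSucc) = f (t j)
      have e1 : t' j.castSucc = (t j).castSucc := by
        rw [ht']
        exact Fin.snoc_castSucc _ _ j
      rw [e1, ← hhinit]
      rfl
    have hinj : Set.InjOn (fun h : Fin (m + 1) → Fin k => fun j => h (t' j))
        ↑(H.filter (fun h => Fin.init h = f)) := by
      intro h₁ hh₁ h₂ hh₂ heq
      simp only [coe_filter, Set.mem_setOf_eq] at hh₁ hh₂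
      have hlast : h₁ (Fin.last m) = h₂ (Fin.last m) := by
        have := congrFun heq (Fin.last d)
        simp only at this
        have e1 : t' (Fin.last d) = Fin.last m := by
          rw [ht']
          exact Fin.snoc_last _ _
        rwa [e1] at this
      calc h₁ = Fin.snoc (Fin.init h₁) (h₁ (Fin.last m)) := (Fin.snoc_init_self h₁).symm
        _ = Fin.snoc (Fin.init h₂) (h₂ (Fin.last m)) := by rw [hh₁.2, hh₂.2, hlast]
        _ = h₂ := Fin.snoc_init_self h₂
    exact le_trans hfbig (Finset.card_le_card_of_injOn _ hmap hinj)
  have claim2 : ∑ p ∈ A, (B.filter (fun b => dp b = p)).card ≤ B.card := by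
    have hfw := Finset.card_eq_sum_card_fiberwise
      (s := B.filter (fun b => dp b ∈ A)) (t := A) (f := dp)
      (fun b hb => (mem_filter.1 hb).2)
    have heq : ∀ p ∈ A, (B.filter (fun b => dp b ∈ A)).filter (fun b => dp b = p)
        = B.filter (fun b => dp b = p) := by
      intro p hp
      ext b
      simp only [mem_filter]
      constructor
      · rintro ⟨⟨hb, -⟩, hbp⟩; exact ⟨hb, hbp⟩
      · rintro ⟨hb, hbp⟩; exact ⟨⟨hb, hbp ▸ hp⟩, hbp⟩
    calc ∑ p ∈ A, (B.filter (fun b => dp b = p)).card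
        = ∑ p ∈ A, ((B.filter (fun b => dp b ∈ A)).filter (fun b => dp b = p)).card :=
          Finset.sum_congr rfl fun p hp => by rw [heq p hp]
      _ = (B.filter (fun b => dp b ∈ A)).card := hfw.symm
      _ ≤ B.card := card_filter_le _ _
  refine le_expDim hℓ ⟨t', ?_⟩
  have hAcard : (ℓ + 1) ^ d ≤ A.card := ht
  calc (ℓ + 1) ^ (d + 1) = (ℓ + 1) ^ d * (ℓ + 1) := pow_succ _ _
    _ ≤ A.card * (ℓ + 1) := Nat.mul_le_mul_right _ hAcard
    _ = ∑ _p ∈ A, (ℓ + 1) := by rw [Finset.sum_const, smul_eq_mul, Nat.mul_comm]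
    _ ≤ ∑ p ∈ A, (B.filter (fun b => dp b = p)).card := Finset.sum_le_sum claim1
    _ ≤ B.card := claim2

end LastDir
section Density
open Finset

/-- The density (shifting) lemma: the total `ℓ`-excess of the edges of the one-inclusion
graph is at most `expDim ℓ H * |H|`. -/
theorem density_le (m : ℕ) : ∀ (k ℓ : ℕ), 1 ≤ ℓ → ∀ H : Finset (Fin m → Fin k),
    ∑ e ∈ oigEdges H, (e.2.card - ℓ) ≤ expDim ℓ H * H.card := by
  induction m with
  | zero =>
    intro k ℓ hℓ H
    simp [oigEdges]
  | succ m ih =>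
    intro k ℓ hℓ H
    classical
    set H' := H.image Fin.init with hH'
    set s : (Fin m → Fin k) → ℕ := fun g => (H.filter (fun h => Fin.init h = g)).card with hs
    set T : ℕ → Finset (Fin m → Fin k) := fun t => H'.filter (fun g => t ≤ s g) with hT
    set d := expDim ℓ H with hd
    have fibk : ∀ g : Fin m → Fin k, s g ≤ k := fun g => fiber_le H g
    have step1 : ∑ e ∈ oigEdges H, (e.2.card - ℓ)
        = ∑ i : Fin m, (∑ eb ∈ H.image (edgeOf H i.castSucc), (eb.card - ℓ))
          + ∑ eb ∈ H.image (edgeOf H (Fin.last m)), (eb.card - ℓ) := by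
      rw [sum_oigEdges H (fun eb => eb.card - ℓ), Fin.sum_univ_castSucc]
    have step4 : ∀ i : Fin m,
        ∑ eb ∈ H.image (edgeOf H i.castSucc), (eb.card - ℓ)
          ≤ ∑ t ∈ Finset.Icc 1 k, ∑ ec ∈ (T t).image (edgeOf (T t) i), (ec.card - ℓ) := by
      intro i
      refine (dir_sum_castSucc H i ℓ).trans ?_
      have perEdge : ∀ ebp ∈ H'.image (edgeOf H' i),
          ∑ y : Fin k, ((ebp.filter (fun g => Fin.snoc g y ∈ H)).card - ℓ)
            ≤ ∑ t ∈ Finset.Icc 1 k, ((ebp.filter (fun g => t ≤ s g)).card - ℓ) := by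
        intro ebp _
        have hb : ∀ g ∈ ebp,
            ((Finset.univ.filter (fun y : Fin k => Fin.snoc g y ∈ H))).card ≤ k := by
          intro g _
          rw [fiber_card]
          exact fibk g
        have hmain := slice_ineq ebp
          (fun g => Finset.univ.filter (fun y : Fin k => Fin.snoc g y ∈ H)) ℓ k hb
        have e1 : ∀ y : Fin k,
            ebp.filter (fun g => y ∈ Finset.univ.filter (fun y : Fin k => Fin.snoc g y ∈ H))
              = ebp.filter (fun g => Fin.snoc g y ∈ H) := by
          intro y
          exact Finset.filter_congr fun g _ => by simp
        have e2 : ∀ t : ℕ,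
            ebp.filter (fun g =>
                t ≤ ((Finset.univ.filter (fun y : Fin k => Fin.snoc g y ∈ H))).card)
              = ebp.filter (fun g => t ≤ s g) := by
          intro t
          exact Finset.filter_congr fun g _ => by rw [fiber_card]
        calc ∑ y : Fin k, ((ebp.filter (fun g => Fin.snoc g y ∈ H)).card - ℓ)
            = ∑ y : Fin k, ((ebp.filter (fun g =>
                y ∈ Finset.univ.filter (fun y : Fin k => Fin.snoc g y ∈ H))).card - ℓ) := by
              exact Finset.sum_congr rfl fun y _ => by rw [e1 y]
          _ ≤ ∑ t ∈ Finset.Icc 1 k, ((ebp.filter (fun g =>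
                t ≤ ((Finset.univ.filter (fun y : Fin k => Fin.snoc g y ∈ H))).card)).card
                  - ℓ) := hmain
          _ = ∑ t ∈ Finset.Icc 1 k, ((ebp.filter (fun g => t ≤ s g)).card - ℓ) := by
              exact Finset.sum_congr rfl fun t _ => by rw [e2 t]
      have restr : ∀ t ∈ Finset.Icc 1 k,
          ∑ ebp ∈ H'.image (edgeOf H' i), ((ebp.filter (fun g => t ≤ s g)).card - ℓ)
            ≤ ∑ ec ∈ (T t).image (edgeOf (T t) i), (ec.card - ℓ) := by
        intro t _
        have e3 : ∀ ebp ∈ H'.image (edgeOf H' i),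
            ebp.filter (fun g => t ≤ s g) = ebp.filter (· ∈ T t) := by
          intro ebp hebp
          obtain ⟨f, -, rfl⟩ := mem_image.1 hebp
          refine Finset.filter_congr fun g hg => ?_
          have hgH' : g ∈ H' := edgeOf_subset hg
          rw [hT]
          simp only [mem_filter, hgH', true_and]
        calc ∑ ebp ∈ H'.image (edgeOf H' i), ((ebp.filter (fun g => t ≤ s g)).card - ℓ)
            = ∑ ebp ∈ H'.image (edgeOf H' i), ((ebp.filter (· ∈ T t)).card - ℓ) :=
              Finset.sum_congr rfl fun ebp hebp => by rw [e3 ebp hebp]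
          _ ≤ ∑ ec ∈ (T t).image (edgeOf (T t) i), (ec.card - ℓ) :=
              sum_edge_restrict (filter_subset _ _) i
      calc ∑ ebp ∈ H'.image (edgeOf H' i),
            ∑ y : Fin k, ((ebp.filter (fun g => Fin.snoc g y ∈ H)).card - ℓ)
          ≤ ∑ ebp ∈ H'.image (edgeOf H' i),
            ∑ t ∈ Finset.Icc 1 k, ((ebp.filter (fun g => t ≤ s g)).card - ℓ) :=
            Finset.sum_le_sum perEdge
        _ = ∑ t ∈ Finset.Icc 1 k,
            ∑ ebp ∈ H'.image (edgeOf H' i), ((ebp.filter (fun g => t ≤ s g)).card - ℓ) :=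
            Finset.sum_comm
        _ ≤ ∑ t ∈ Finset.Icc 1 k, ∑ ec ∈ (T t).image (edgeOf (T t) i), (ec.card - ℓ) :=
            Finset.sum_le_sum restr
    have step5 : ∑ i : Fin m, (∑ eb ∈ H.image (edgeOf H i.castSucc), (eb.card - ℓ))
        ≤ ∑ t ∈ Finset.Icc 1 k, ∑ e ∈ oigEdges (T t), (e.2.card - ℓ) := by
      calc ∑ i : Fin m, (∑ eb ∈ H.image (edgeOf H i.castSucc), (eb.card - ℓ))
          ≤ ∑ i : Fin m, ∑ t ∈ Finset.Icc 1 k,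
              ∑ ec ∈ (T t).image (edgeOf (T t) i), (ec.card - ℓ) :=
            Finset.sum_le_sum fun i _ => step4 i
        _ = ∑ t ∈ Finset.Icc 1 k, ∑ i : Fin m,
              ∑ ec ∈ (T t).image (edgeOf (T t) i), (ec.card - ℓ) := Finset.sum_comm
        _ = ∑ t ∈ Finset.Icc 1 k, ∑ e ∈ oigEdges (T t), (e.2.card - ℓ) :=
            Finset.sum_congr rfl fun t _ => (sum_oigEdges (T t) (fun ec => ec.card - ℓ)).symm
    have step3 : ∑ eb ∈ H.image (edgeOf H (Fin.last m)), (eb.card - ℓ)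
        = ∑ g ∈ H', (s g - ℓ) := sum_last H ℓ
    have sumT : ∑ t ∈ Finset.Icc 1 k, (T t).card = H.card := by
      have h2 : ∀ g ∈ H', ∑ t ∈ Finset.Icc 1 k, (if t ≤ s g then 1 else 0) = s g := by
        intro g _
        rw [← card_filter]
        have e4 : (Finset.Icc 1 k).filter (fun t => t ≤ s g) = Finset.Icc 1 (s g) := by
          ext t
          simp only [mem_filter, mem_Icc]
          have := fibk g
          omega
        rw [e4, Nat.card_Icc]
        omega
      calc ∑ t ∈ Finset.Icc 1 k, (T t).card
          = ∑ t ∈ Finset.Icc 1 k, ∑ g ∈ H', (if t ≤ s g then 1 else 0) :=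
            Finset.sum_congr rfl fun t _ => card_filter _ _
        _ = ∑ g ∈ H', ∑ t ∈ Finset.Icc 1 k, (if t ≤ s g then 1 else 0) := Finset.sum_comm
        _ = ∑ g ∈ H', s g := Finset.sum_congr rfl h2
        _ = H.card :=
            (Finset.card_eq_sum_card_fiberwise fun h hh => mem_image_of_mem Fin.init hh).symm
    have sumFib : ∑ g ∈ H', (s g - ℓ) = ∑ t ∈ Finset.Icc (ℓ + 1) k, (T t).card := by
      have h2 : ∀ g ∈ H', ∑ t ∈ Finset.Icc (ℓ + 1) k, (if t ≤ s g then 1 else 0)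
          = s g - ℓ := by
        intro g _
        rw [← card_filter]
        have e4 : (Finset.Icc (ℓ + 1) k).filter (fun t => t ≤ s g)
            = Finset.Icc (ℓ + 1) (s g) := by
          ext t
          simp only [mem_filter, mem_Icc]
          have := fibk g
          omega
        rw [e4, Nat.card_Icc]
        omega
      calc ∑ g ∈ H', (s g - ℓ)
          = ∑ g ∈ H', ∑ t ∈ Finset.Icc (ℓ + 1) k, (if t ≤ s g then 1 else 0) :=
            (Finset.sum_congr rfl h2).symm
        _ = ∑ t ∈ Finset.Icc (ℓ + 1) k, ∑ g ∈ H', (if t ≤ s g then 1 else 0) :=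
            Finset.sum_comm
        _ = ∑ t ∈ Finset.Icc (ℓ + 1) k, (T t).card :=
            Finset.sum_congr rfl fun t _ => (card_filter _ _).symm
    have coef : ∀ t ∈ Finset.Icc 1 k,
        expDim ℓ (T t) * (T t).card + (if ℓ + 1 ≤ t then (T t).card else 0)
          ≤ d * (T t).card := by
      intro t _
      by_cases hTne : (T t).Nonempty
      · by_cases hℓt : ℓ + 1 ≤ t
        · have hsub : T t ⊆ T (ℓ + 1) := by
            intro g hg
            rw [hT] at hg ⊢
            obtain ⟨h1, h2⟩ := mem_filter.1 hg
            exact mem_filter.2 ⟨h1, le_trans hℓt h2⟩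
          have h1 : expDim ℓ (T t) ≤ expDim ℓ (T (ℓ + 1)) := expDim_mono hℓ hsub
          obtain ⟨x, hx⟩ := hTne
          have hne2 : (T (ℓ + 1)).Nonempty := ⟨x, hsub hx⟩
          have h2 : expDim ℓ (T (ℓ + 1)) + 1 ≤ d := expDim_big_add_one_le hℓ H hne2
          rw [if_pos hℓt]
          calc expDim ℓ (T t) * (T t).card + (T t).card
              = (expDim ℓ (T t) + 1) * (T t).card := by ring
            _ ≤ d * (T t).card := Nat.mul_le_mul_right _ (by omega)
        · rw [if_neg hℓt, add_zero]
          refine Nat.mul_le_mul_right _ ?_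
          exact le_trans (expDim_mono hℓ (filter_subset _ _)) (expDim_init_le hℓ H)
      · rw [not_nonempty_iff_eq_empty.1 hTne]
        simp
    have sumIf : ∑ t ∈ Finset.Icc (ℓ + 1) k, (T t).card
        = ∑ t ∈ Finset.Icc 1 k, (if ℓ + 1 ≤ t then (T t).card else 0) := by
      rw [← Finset.sum_filter]
      congr 1
      ext t
      simp only [mem_filter, mem_Icc]
      omega
    calc ∑ e ∈ oigEdges H, (e.2.card - ℓ)
        = ∑ i : Fin m, (∑ eb ∈ H.image (edgeOf H i.castSucc), (eb.card - ℓ))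
          + ∑ eb ∈ H.image (edgeOf H (Fin.last m)), (eb.card - ℓ) := step1
      _ ≤ (∑ t ∈ Finset.Icc 1 k, ∑ e ∈ oigEdges (T t), (e.2.card - ℓ))
          + ∑ g ∈ H', (s g - ℓ) := add_le_add step5 (le_of_eq step3)
      _ ≤ (∑ t ∈ Finset.Icc 1 k, expDim ℓ (T t) * (T t).card)
          + ∑ t ∈ Finset.Icc (ℓ + 1) k, (T t).card :=
          add_le_add (Finset.sum_le_sum fun t _ => ih k ℓ hℓ (T t)) (le_of_eq sumFib)
      _ = ∑ t ∈ Finset.Icc 1 k,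
            (expDim ℓ (T t) * (T t).card + (if ℓ + 1 ≤ t then (T t).card else 0)) := by
          rw [sumIf, ← Finset.sum_add_distrib]
      _ ≤ ∑ t ∈ Finset.Icc 1 k, d * (T t).card := Finset.sum_le_sum coef
      _ = d * ∑ t ∈ Finset.Icc 1 k, (T t).card := by rw [Finset.mul_sum]
      _ = d * H.card := by rw [sumT]

end Density
open Finset in
lemma subset_of_mem_oigEdges {m k : ℕ} {H : Finset (Fin m → Fin k)}
    {a : Fin m × Finset (Fin m → Fin k)} (ha : a ∈ oigEdges H) : a.2 ⊆ H := by
  obtain ⟨p, -, heq⟩ := Finset.mem_image.1 ha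
  rw [← heq]
  exact edgeOf_subset

open Finset in
theorem orientation_outdeg_le_expDim' (k m ℓ : ℕ) (hℓ : 1 ≤ ℓ)
    (H : Finset (Fin m → Fin k)) (hne : H.Nonempty) :
    ∃ σ : Fin m × Finset (Fin m → Fin k) → Finset (Fin m → Fin k),
      (∀ e ∈ oigEdges H, σ e ⊆ e.2 ∧ (σ e).card ≤ ℓ) ∧
      ∀ v ∈ H, ((oigEdges H).filter fun e => v ∈ e.2 ∧ v ∉ σ e).card ≤ expDim ℓ H := by
  classical
  set d := expDim ℓ H with hd
  have hyp : ∀ W : Finset (Fin m → Fin k),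
      ∑ a ∈ oigEdges H, ((a.2.card - ℓ) - (a.2 \ W).card) ≤ ∑ _v ∈ W, d := by
    intro W
    have hterm : ∀ a ∈ oigEdges H,
        (a.2.card - ℓ) - (a.2 \ W).card ≤ ((a.2.filter (· ∈ W ∩ H)).card - ℓ) := by
      intro a ha
      have hsub : a.2 ⊆ H := subset_of_mem_oigEdges ha
      have h1 : a.2.filter (· ∈ W ∩ H) = a.2.filter (· ∈ W) :=
        Finset.filter_congr fun x hx => by simp [mem_inter, hsub hx]
      have h2 : (a.2 \ W).card + (a.2 ∩ W).card = a.2.card :=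
        card_sdiff_add_card_inter _ _
      have h3 : a.2.filter (· ∈ W) = a.2 ∩ W := by
        ext x
        simp [mem_filter, mem_inter]
      rw [h1, h3]
      omega
    calc ∑ a ∈ oigEdges H, ((a.2.card - ℓ) - (a.2 \ W).card)
        ≤ ∑ a ∈ oigEdges H, ((a.2.filter (· ∈ W ∩ H)).card - ℓ) :=
          Finset.sum_le_sum hterm
      _ = ∑ i : Fin m, ∑ eb ∈ H.image (edgeOf H i), ((eb.filter (· ∈ W ∩ H)).card - ℓ) :=
          sum_oigEdges H (fun eb => (eb.filter (· ∈ W ∩ H)).card - ℓ)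
      _ ≤ ∑ i : Fin m, ∑ ec ∈ (W ∩ H).image (edgeOf (W ∩ H) i), (ec.card - ℓ) :=
          Finset.sum_le_sum fun i _ => sum_edge_restrict inter_subset_right i
      _ = ∑ e ∈ oigEdges (W ∩ H), (e.2.card - ℓ) :=
          (sum_oigEdges (W ∩ H) (fun ec => ec.card - ℓ)).symm
      _ ≤ expDim ℓ (W ∩ H) * (W ∩ H).card := density_le m k ℓ hℓ (W ∩ H)
      _ ≤ d * W.card :=
          Nat.mul_le_mul (expDim_mono hℓ inter_subset_right) (card_le_card inter_subset_left)
      _ = ∑ _v ∈ W, d := by rw [Finset.sum_const, smul_eq_mul, Nat.mul_comm]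
  obtain ⟨X, hX1, hX2⟩ := flow_lemma (∑ a ∈ oigEdges H, (a.2.card - ℓ)) (oigEdges H)
    (fun a => a.2) (fun a => a.2.card - ℓ) (fun _ => d) rfl hyp
  refine ⟨fun e => e.2 \ X e, ?_, ?_⟩
  · intro e he
    obtain ⟨hXsub, hXcard⟩ := hX1 e he
    refine ⟨sdiff_subset, ?_⟩
    rw [card_sdiff_of_subset hXsub, hXcard]
    omega
  · intro v _
    have heq : (oigEdges H).filter (fun e => v ∈ e.2 ∧ v ∉ e.2 \ X e)
        = (oigEdges H).filter (fun e => v ∈ X e) := by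
      refine Finset.filter_congr fun e he => ?_
      obtain ⟨hXsub, -⟩ := hX1 e he
      simp only [mem_sdiff, not_and, not_not]
      constructor
      · rintro ⟨hv2, himp⟩
        exact himp hv2
      · intro hvX
        exact ⟨hXsub hvX, fun _ => hvX⟩
    rw [heq]
    exact hX2 v


/-- Every nonempty finite class `H ⊆ [k]^m` admits an `ℓ`-list orientation of its
one-inclusion graph (each edge `e` is assigned a subset `σ e ⊆ e` of size at most `ℓ`)
whose maximum `ℓ`-outdegree is at most the `ℓ`-exponential dimension of `H`. -/
theorem orientation_outdeg_le_expDim (k m ℓ : ℕ) (hℓ : 1 ≤ ℓ)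
    (H : Finset (Fin m → Fin k)) (hne : H.Nonempty) :
    ∃ σ : Fin m × Finset (Fin m → Fin k) → Finset (Fin m → Fin k),
      (∀ e ∈ oigEdges H, σ e ⊆ e.2 ∧ (σ e).card ≤ ℓ) ∧
      ∀ v ∈ H, ((oigEdges H).filter fun e => v ∈ e.2 ∧ v ∉ σ e).card ≤ expDim ℓ H :=
  orientation_outdeg_le_expDim' k m ℓ hℓ H hne
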